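/- If G is an s×m random matrix over F_q with independent uniformly distributed entries and H is any m×n random matrix independent of G, then the conditional probability that rank(GH) = s given rank(H) = r (for s ≤ r ≤ m) equals ∏_{i=0}^{s-1}(1 − q^{-(r-i)}). -/

import Mathlib

open Classical Finset LinearMap in
/-- Count of `G` with `rank (G * H) = s`, for `H` of rank `r`. -/
lemma count_aux {F : Type*} [Field F] [Fintype F] [DecidableEq F] {s r m n : ℕ}
    (hsr : s ≤ r) (H : Matrix (Fin m) (Fin n) F) (hr : H.rank = r) :
    (Finset.univ.filter (fun G : Matrix (Fin s) (Fin m) F => (G * H).rank = s)).card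
      = (∏ i ∈ Finset.range s, (Fintype.card F ^ r - Fintype.card F ^ i))
        * (Fintype.card F ^ (m - r)) ^ s := by
  classical
  set f : (Fin m → F) →ₗ[F] (Fin n → F) := H.vecMulLinear with hf
  set K : Submodule F (Fin m → F) := LinearMap.ker f with hK
  -- rows of G*H
  have hrow : ∀ (G : Matrix (Fin s) (Fin m) F) (i : Fin s), (G * H) i = f (G i) := by
    intro G i
    funext j
    simp [hf, Matrix.mul_apply, Matrix.vecMul, dotProduct]
  -- rank condition ↔ linear independence of images
  have hiff1 : ∀ G : Matrix (Fin s) (Fin m) F,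
      (G * H).rank = s ↔ LinearIndependent F (fun i => f (G i)) := by
    intro G
    have h1 : (G * H).rank = Module.finrank F (Submodule.span F (Set.range (G * H))) :=
      Matrix.rank_eq_finrank_span_row _
    have h2 : LinearIndependent F (G * H) ↔
        Fintype.card (Fin s) = (Set.range (G * H)).finrank F :=
      linearIndependent_iff_card_eq_finrank_span
    have h3 : (fun i => f (G i)) = (G * H) := by
      funext i; exact (hrow G i).symm
    rw [h3, h2, h1]
    simp [Set.finrank, eq_comm]
  -- factor through the quotient
  set π : (Fin m → F) →ₗ[F] ((Fin m → F) ⧸ K) := K.mkQ with hπ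
  set ι : ((Fin m → F) ⧸ K) →ₗ[F] (Fin n → F) :=
    (LinearMap.range f).subtype ∘ₗ (f.quotKerEquivRange : ((Fin m → F) ⧸ K) ≃ₗ[F] _) with hι
  have hιinj : LinearMap.ker ι = ⊥ := by
    rw [LinearMap.ker_eq_bot]
    exact Subtype.val_injective.comp f.quotKerEquivRange.injective
  have hcomp : ∀ x, f x = ι (π x) := by
    intro x
    simp [hι, hπ, Submodule.mkQ_apply, f.quotKerEquivRange_apply_mk]
  have hiff2 : ∀ G : Matrix (Fin s) (Fin m) F,
      LinearIndependent F (fun i => f (G i)) ↔ LinearIndependent F (fun i => π (G i)) := by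
    intro G
    have : (fun i => f (G i)) = ι ∘ (fun i => π (G i)) := by
      funext i; exact hcomp (G i)
    rw [this]
    exact ι.linearIndependent_iff hιinj
  -- dimensions
  have hQ : Module.finrank F ((Fin m → F) ⧸ K) = r := by
    rw [f.quotKerEquivRange.finrank_eq]
    have : LinearMap.range f = Submodule.span F (Set.range H) := range_vecMulLinear H
    rw [this]; exact (Matrix.rank_eq_finrank_span_row H).symm.trans hr
  have hKdim : Module.finrank F K = m - r := by
    have h := f.finrank_range_add_finrank_ker
    have hm : Module.finrank F (Fin m → F) = m := by simp
    have hR : Module.finrank F (LinearMap.range f) = r := by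
      have : LinearMap.range f = Submodule.span F (Set.range H) := range_vecMulLinear H
      rw [this]; exact (Matrix.rank_eq_finrank_span_row H).symm.trans hr
    rw [hR, hm] at h
    rw [hK]
    omega
  -- section of π
  obtain ⟨σ, hσ⟩ := π.exists_rightInverse_of_surjective (Submodule.range_mkQ K)
  have hσ' : ∀ x, π (σ x) = x := fun x => congrFun (congrArg DFunLike.coe hσ) x
  -- the key equivalence
  have mem_aux : ∀ (x : Fin m → F), x - σ (π x) ∈ K := by
    intro x
    have : π (x - σ (π x)) = 0 := by rw [map_sub, hσ' (π x), sub_self]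
    rwa [hπ, Submodule.mkQ_apply, Submodule.Quotient.mk_eq_zero] at this
  let e : {g : Fin s → (Fin m → F) // LinearIndependent F (fun i => π (g i))} ≃
      {h : Fin s → ((Fin m → F) ⧸ K) // LinearIndependent F h} × (Fin s → K) :=
    { toFun := fun g => (⟨fun i => π (g.1 i), g.2⟩,
        fun i => ⟨g.1 i - σ (π (g.1 i)), mem_aux _⟩)
      invFun := fun p => ⟨fun i => σ (p.1.1 i) + (p.2 i : Fin m → F), by
        have hz : ∀ i, π ((p.2 i : Fin m → F)) = 0 := by
          intro i
          rw [hπ, Submodule.mkQ_apply, Submodule.Quotient.mk_eq_zero]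
          exact (p.2 i).2
        have : (fun i => π (σ (p.1.1 i) + (p.2 i : Fin m → F))) = p.1.1 := by
          funext i; rw [map_add, hσ', hz, add_zero]
        rw [this]
        exact p.1.2⟩
      left_inv := fun g => by
        ext i
        simp
      right_inv := fun p => by
        refine Prod.ext (Subtype.ext ?_) ?_
        · funext i
          have hz : π ((p.2 i : Fin m → F)) = 0 := by
            rw [hπ, Submodule.mkQ_apply, Submodule.Quotient.mk_eq_zero]
            exact (p.2 i).2
          simp [map_add, hσ', hz]
        · funext i
          apply Subtype.ext
          have hz : π ((p.2 i : Fin m → F)) = 0 := by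
            rw [hπ, Submodule.mkQ_apply, Submodule.Quotient.mk_eq_zero]
            exact (p.2 i).2
          simp [map_add, hσ', hz] }
  -- counting
  have hcard1 : (Finset.univ.filter (fun G : Matrix (Fin s) (Fin m) F => (G * H).rank = s)).card
      = Fintype.card {g : Fin s → (Fin m → F) // LinearIndependent F (fun i => π (g i))} := by
    rw [← Fintype.card_subtype]
    exact Fintype.card_congr (Equiv.subtypeEquivRight (fun G =>
      (hiff1 G).trans (hiff2 G)))
  have hcard2 : Fintype.card {h : Fin s → ((Fin m → F) ⧸ K) // LinearIndependent F h}
      = ∏ i ∈ Finset.range s, (Fintype.card F ^ r - Fintype.card F ^ i) := by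
    have := card_linearIndependent (K := F) (V := (Fin m → F) ⧸ K) (k := s) (hQ ▸ hsr)
    rw [Nat.card_eq_fintype_card] at this
    rw [this, hQ]
    exact Fin.prod_univ_eq_prod_range (fun j => Fintype.card F ^ r - Fintype.card F ^ j) s
  have hcard3 : Fintype.card (Fin s → K) = (Fintype.card F ^ (m - r)) ^ s := by
    rw [Fintype.card_fun, Module.card_eq_pow_finrank (K := F) (V := K), hKdim, Fintype.card_fin]
  rw [hcard1, Fintype.card_congr e, Fintype.card_prod, hcard2, hcard3]

lemma arith_aux (q s r m : ℕ) (hq : 0 < q) (hsr : s ≤ r) (hrm : r ≤ m) :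
    ((q : ℝ) ^ (s * m))⁻¹ *
      ((∏ i ∈ Finset.range s, (q ^ r - q ^ i : ℕ)) * (q ^ (m - r)) ^ s : ℕ) =
      ∏ i ∈ Finset.range s, (1 - ((q : ℝ) ^ (r - i))⁻¹) := by
  have hq0 : (0 : ℝ) < (q : ℝ) := by exact_mod_cast hq
  push_cast
  have hcast : ∀ i ∈ Finset.range s, ((q ^ r - q ^ i : ℕ) : ℝ) = (q : ℝ) ^ r - (q : ℝ) ^ i := by
    intro i hi
    have : q ^ i ≤ q ^ r := Nat.pow_le_pow_right hq (le_trans (Finset.mem_range.mp hi).le hsr)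
    push_cast [Nat.cast_sub this]
    ring
  rw [Finset.prod_congr rfl hcast]
  have hpm : ((q : ℝ) ^ (s * m))⁻¹ = ∏ _i ∈ Finset.range s, ((q : ℝ) ^ m)⁻¹ := by
    rw [Finset.prod_const, Finset.card_range, inv_pow, ← pow_mul, mul_comm m s]
  have hps : ((q : ℝ) ^ (m - r)) ^ s = ∏ _i ∈ Finset.range s, (q : ℝ) ^ (m - r) := by
    rw [Finset.prod_const, Finset.card_range]
  rw [hpm, hps, ← Finset.prod_mul_distrib, mul_comm, ← Finset.prod_mul_distrib]
  refine Finset.prod_congr rfl (fun i hi => ?_)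
  have hir : i ≤ r := le_trans (Finset.mem_range.mp hi).le hsr
  have e1 : (q : ℝ) ^ m = (q : ℝ) ^ (m - r) * (q : ℝ) ^ r := by
    rw [← pow_add, Nat.sub_add_cancel hrm]
  have e2 : (q : ℝ) ^ r = (q : ℝ) ^ (r - i) * (q : ℝ) ^ i := by
    rw [← pow_add, Nat.sub_add_cancel hir]
  rw [e1]
  have h1 : (q : ℝ) ^ (m - r) ≠ 0 := pow_ne_zero _ hq0.ne'
  have h2 : (q : ℝ) ^ r ≠ 0 := pow_ne_zero _ hq0.ne'
  have h3 : (q : ℝ) ^ (r - i) ≠ 0 := pow_ne_zero _ hq0.ne'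
  field_simp
  rw [e2]
  ring

open Classical in
theorem stmt6 {F : Type*} [Field F] [Fintype F] [DecidableEq F] (q s r m n : ℕ)
    (hq : Fintype.card F = q) (hsr : s ≤ r) (hrm : r ≤ m)
    (pH : Matrix (Fin m) (Fin n) F → ℝ) (hH0 : ∀ H, 0 ≤ pH H)
    (hH1 : ∑ H, pH H = 1)
    (hpos : 0 < ∑ H ∈ Finset.univ.filter (fun H : Matrix (Fin m) (Fin n) F =>
      H.rank = r), pH H) :
    (∑ G : Matrix (Fin s) (Fin m) F,
        ∑ H ∈ Finset.univ.filter (fun H : Matrix (Fin m) (Fin n) F => H.rank = r),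
          ((q : ℝ) ^ (s * m))⁻¹ * pH H * (if (G * H).rank = s then 1 else 0)) /
      (∑ H ∈ Finset.univ.filter (fun H : Matrix (Fin m) (Fin n) F => H.rank = r), pH H) =
      ∏ i ∈ Finset.range s, (1 - ((q : ℝ) ^ (r - i))⁻¹) := by
  subst hq
  set C : ℝ := ∏ i ∈ Finset.range s, (1 - ((Fintype.card F : ℝ) ^ (r - i))⁻¹) with hC
  have hqpos : 0 < Fintype.card F := Fintype.card_pos
  rw [Finset.sum_comm]
  have key : ∀ H ∈ Finset.univ.filter (fun H : Matrix (Fin m) (Fin n) F => H.rank = r),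
      (∑ G : Matrix (Fin s) (Fin m) F,
        ((Fintype.card F : ℝ) ^ (s * m))⁻¹ * pH H * (if (G * H).rank = s then 1 else 0))
      = pH H * C := by
    intro H hH
    have hr : H.rank = r := (Finset.mem_filter.mp hH).2
    rw [← Finset.mul_sum, Finset.sum_boole, count_aux hsr H hr, hC]
    rw [← arith_aux (Fintype.card F) s r m hqpos hsr hrm]
    push_cast
    ring
  rw [Finset.sum_congr rfl key, ← Finset.sum_mul, mul_comm, mul_div_assoc,
    div_self hpos.ne', mul_one]
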